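/- Let α = 3 - 2√2, z_n = -(2+2√2) + 4√2/(1-α^{2n+2}), and define t_0 = -1 and t_n = t_{n-1}/(z_{n-1}+5) for n ≥ 1. Then t_n = -4√2 · α^{n+1} / (1 - α^{2n+2}) for all n ≥ 0. -/
import Mathlib


theorem stmt_2 (α : ℝ) (hα : α = 3 - 2 * Real.sqrt 2)
    (z t : ℕ → ℝ)
    (hz : ∀ n, z n = -(2 + 2 * Real.sqrt 2) + 4 * Real.sqrt 2 / (1 - α ^ (2 * n + 2)))
    (ht0 : t 0 = -1)
    (htrec : ∀ n, 1 ≤ n → t n = t (n - 1) / (z (n - 1) + 5)) :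
    ∀ n, t n = -4 * Real.sqrt 2 * α ^ (n + 1) / (1 - α ^ (2 * n + 2)) := by
  set s := Real.sqrt 2 with hsdef
  have hs : s ^ 2 = 2 := Real.sq_sqrt (by norm_num)
  have hs0 : 0 ≤ s := Real.sqrt_nonneg 2
  have hs1 : 1 < s := by nlinarith
  have hs2 : s < 3 / 2 := by nlinarith
  have hα0 : 0 < α := by rw [hα]; linarith
  have hα1 : α < 1 := by rw [hα]; linarith
  have hden : ∀ k : ℕ, (0 : ℝ) < 1 - α ^ (2 * k + 2) := by
    intro k
    have : α ^ (2 * k + 2) < 1 := pow_lt_one₀ hα0.le hα1 (by omega)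
    linarith
  have hkey : α ^ 2 + 4 * s * α = 1 := by rw [hα]; nlinarith
  intro n
  induction n with
  | zero =>
    rw [ht0, eq_div_iff (hden 0).ne']
    rw [hα]
    linear_combination (-4 : ℝ) * hs
  | succ n ih =>
    have h1 := htrec (n + 1) (by omega)
    simp only [Nat.add_sub_cancel] at h1
    rw [h1, ih, hz]
    have hD := hden n
    have hD' := hden (n + 1)
    have hBnum : 0 < α * (1 - α ^ (2 * n + 2)) + 4 * s := by
      have := mul_pos hα0 hD
      linarith
    have h4 : 4 * s / (1 - α ^ (2 * n + 2)) * (1 - α ^ (2 * n + 2)) = 4 * s :=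
      div_mul_cancel₀ _ hD.ne'
    have hz5 : -(2 + 2 * s) + 4 * s / (1 - α ^ (2 * n + 2)) + 5
        = (α * (1 - α ^ (2 * n + 2)) + 4 * s) / (1 - α ^ (2 * n + 2)) := by
      rw [eq_div_iff hD.ne']
      linear_combination h4 - (1 - α ^ (2 * n + 2)) * hα
    rw [hz5, div_div_div_comm, div_self hD.ne', div_one]
    rw [div_eq_div_iff hBnum.ne' (hden (n + 1)).ne']
    have e1 : 2 * (n + 1) + 2 = 2 * n + 2 + 2 := by ring
    rw [e1]
    linear_combination (4 * s * α ^ (n + 1)) * hkey
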